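/- Let $G$ be a group, $H$ a subgroup, and $A \subseteq G$ a nonempty finite set. If $l$ is the number of left cosets of $H$ intersecting $A$, then $|A^{-1} A \cap H| \geq |A| / l$. -/

import Mathlib

open scoped Pointwise

theorem stmt_5 {G : Type*} [Group G] (H : Subgroup G) (A : Set G)
    (hA : A.Finite) (hne : A.Nonempty) :
    ((A⁻¹ * A ∩ (H : Set G)).ncard : ℝ) ≥
      (A.ncard : ℝ) / (((QuotientGroup.mk : G → G ⧸ H) '' A).ncard : ℝ) := by
  classical
  set f : G → G ⧸ H := QuotientGroup.mk with hf
  have hB : (A⁻¹ * A ∩ (H : Set G)).Finite := (hA.inv.mul hA).inter_of_left _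
  set s : Finset G := hA.toFinset with hs
  have hsA : (s : Set G) = A := hA.coe_toFinset
  set b : Finset G := hB.toFinset with hb
  have hbB : (b : Set G) = A⁻¹ * A ∩ (H : Set G) := hB.coe_toFinset
  set t : Finset (G ⧸ H) := s.image f with ht
  have himg : f '' A = (t : Set (G ⧸ H)) := by
    rw [ht, Finset.coe_image, hsA]
  have key : s.card ≤ t.card * b.card := by
    have hsum : s.card = ∑ y ∈ t, (s.filter (fun x => f x = y)).card :=
      Finset.card_eq_sum_card_fiberwise (fun x hx => Finset.mem_image_of_mem f hx)
    rw [hsum]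
    have hfib : ∀ y ∈ t, (s.filter (fun x => f x = y)).card ≤ b.card := by
      intro y hy
      obtain ⟨a, ha, hay⟩ := Finset.mem_image.mp hy
      apply Finset.card_le_card_of_injOn (fun x => a⁻¹ * x)
      · intro x hx
        rw [Finset.mem_coe, Finset.mem_filter] at hx
        obtain ⟨hxs, hxy⟩ := hx
        have hmemH : a⁻¹ * x ∈ H := by
          have : f a = f x := by rw [hay, hxy]
          exact (QuotientGroup.eq).mp this
        have hmemAA : a⁻¹ * x ∈ A⁻¹ * A := by
          refine Set.mul_mem_mul ?_ ?_
          · refine Set.inv_mem_inv.mpr ?_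
            have h' : a ∈ (s : Set G) := ha
            rwa [hsA] at h'
          · have h' : x ∈ (s : Set G) := hxs
            rwa [hsA] at h'
        have : a⁻¹ * x ∈ (b : Set G) := by rw [hbB]; exact ⟨hmemAA, hmemH⟩
        exact this
      · intro x _ y _ hxy
        exact mul_left_cancel hxy
    calc ∑ y ∈ t, (s.filter (fun x => f x = y)).card
        ≤ ∑ _y ∈ t, b.card := Finset.sum_le_sum hfib
      _ = t.card * b.card := by rw [Finset.sum_const, smul_eq_mul]
  have hAcard : A.ncard = s.card := by rw [← hsA, Set.ncard_coe_finset]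
  have hBcard : (A⁻¹ * A ∩ (H : Set G)).ncard = b.card := by
    rw [← hbB, Set.ncard_coe_finset]
  have hTcard : (f '' A).ncard = t.card := by rw [himg, Set.ncard_coe_finset]
  have hl : 0 < t.card := by
    rw [ht, Finset.card_pos, Finset.image_nonempty, ← Finset.coe_nonempty, hsA]
    exact hne
  rw [ge_iff_le, div_le_iff₀ (by exact_mod_cast (hTcard ▸ hl))]
  rw [hAcard, hBcard, hTcard]
  exact_mod_cast key.trans_eq (Nat.mul_comm _ _)
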